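/- For every β < 2/π there exist a, b > 0 with a ≠ b such that T(a,b) > β·D(a,b) + (1−β)·H(a,b); in fact, there exists T₀ > 1 such that this inequality holds for all a, b > 0 with a/b ∈ (T₀, ∞). -/

import Mathlib

noncomputable def harmonicMean (a b : ℝ) : ℝ := 2 * a * b / (a + b)

noncomputable def seiffertT (a b : ℝ) : ℝ := (a - b) / (2 * Real.arctan ((a - b) / (a + b)))

noncomputable def contraD (a b : ℝ) : ℝ := (a ^ 3 + b ^ 3) / (a ^ 2 + b ^ 2)

set_option maxHeartbeats 800000 in
theorem stmt_4 (β : ℝ) (hβ : β < 2 / Real.pi) :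
    ∃ T₀ > (1 : ℝ), ∀ a b : ℝ, 0 < a → 0 < b → a / b ∈ Set.Ioi T₀ →
      β * contraD a b + (1 - β) * harmonicMean a b < seiffertT a b := by
  have hpi := Real.pi_pos
  have hε0 : 0 < 2 / Real.pi - β := by linarith
  set C : ℝ := 2 + 3 * |β| + 2 / Real.pi with hC
  refine ⟨max 2 (C / (2 / Real.pi - β)), lt_of_lt_of_le one_lt_two (le_max_left _ _), ?_⟩
  intro a b ha hb hmem
  simp only [Set.mem_Ioi] at hmem
  have hab : max 2 (C / (2 / Real.pi - β)) * b < a := (lt_div_iff₀ hb).mp hmem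
  have h2b : 2 * b < a :=
    lt_of_le_of_lt (mul_le_mul_of_nonneg_right (le_max_left _ _) hb.le) hab
  have hCb : C * b < (2 / Real.pi - β) * a := by
    have h1 : C / (2 / Real.pi - β) * b < a :=
      lt_of_le_of_lt (mul_le_mul_of_nonneg_right (le_max_right _ _) hb.le) hab
    have h2 := mul_lt_mul_of_pos_right h1 hε0
    have h3 : C / (2 / Real.pi - β) * b * (2 / Real.pi - β) = C * b := by
      rw [mul_right_comm, div_mul_cancel₀ _ hε0.ne']
    linarith [h2, h3.symm.le]
  have hab' : b < a := by linarith
  have habpos : 0 < a + b := by linarith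
  have hsq : 0 < a ^ 2 + b ^ 2 := by positivity
  -- harmonic mean bound
  have hH : harmonicMean a b < 2 * b := by
    rw [harmonicMean, div_lt_iff₀ habpos]
    nlinarith
  have hHpos : 0 < harmonicMean a b := by
    rw [harmonicMean]; positivity
  -- contraD bounds
  have hD1 : contraD a b < a + b := by
    rw [contraD, div_lt_iff₀ hsq]
    nlinarith
  have hD2 : a - b < contraD a b := by
    rw [contraD, lt_div_iff₀ hsq]
    nlinarith [mul_pos (mul_pos hb hb) hb, mul_pos (sub_pos.mpr hab') (mul_pos ha hb)]
  -- Seiffert bound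
  have hu0 : 0 < (a - b) / (a + b) := div_pos (by linarith) habpos
  have hu1 : (a - b) / (a + b) < 1 := by
    rw [div_lt_one habpos]; linarith
  have harctan_pos : 0 < Real.arctan ((a - b) / (a + b)) := by
    have := Real.arctan_strictMono hu0
    rwa [Real.arctan_zero] at this
  have harctan_lt : Real.arctan ((a - b) / (a + b)) < Real.pi / 4 := by
    have := Real.arctan_strictMono hu1
    rwa [Real.arctan_one] at this
  have hT : 2 * (a - b) / Real.pi < seiffertT a b := by
    rw [seiffertT]
    have h1 : 0 < 2 * Real.arctan ((a - b) / (a + b)) := by linarith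
    have h2 : 2 * Real.arctan ((a - b) / (a + b)) < Real.pi / 2 := by linarith
    have h3 := div_lt_div_of_pos_left (show (0:ℝ) < a - b by linarith) h1 h2
    have h4 : (a - b) / (Real.pi / 2) = 2 * (a - b) / Real.pi := by
      field_simp
    linarith [h4 ▸ h3]
  -- combine
  have h1β : 0 < 1 - β := by
    have : 2 / Real.pi < 1 := by
      rw [div_lt_one hpi]; linarith [Real.pi_gt_three]
    linarith
  have hHb : (1 - β) * harmonicMean a b < (1 - β) * (2 * b) :=
    mul_lt_mul_of_pos_left hH h1β
  have hDb : β * contraD a b ≤ β * a + |β| * b := by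
    rcases le_or_gt 0 β with h | h
    · have := mul_le_mul_of_nonneg_left hD1.le h
      rw [abs_of_nonneg h]; nlinarith
    · have := mul_le_mul_of_nonpos_left hD2.le h.le
      rw [abs_of_neg h]; nlinarith
  have habs1 : -β ≤ |β| := neg_le_abs β
  have hfinal : β * a + |β| * b + (1 - β) * (2 * b) ≤ 2 * (a - b) / Real.pi := by
    have hexp : 2 * (a - b) / Real.pi = 2 / Real.pi * a - 2 / Real.pi * b := by ring
    rw [hexp]
    nlinarith [mul_nonneg (abs_nonneg β) hb.le, hb.le]
  linarith
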